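/- Let 0 < a < b and define w₀(τ) = (a+b)τ/(ab+τ²) on [a,b], and μ the measure on (0,∞) with density 1/x. For t ∈ [1, A/G) where A=(a+b)/2, G=√(ab), the distribution function μ_{w₀}(t) := μ({τ ∈ (a,b) : w₀(τ) > t}) equals 2·log((λ + √(λ² - t²))/t), where λ = A/G. -/

import Mathlib

open Set MeasureTheory

set_option maxHeartbeats 1000000 in
theorem stmt_12 (a b : ℝ) (ha : 0 < a) (hab : a < b)
    (A G lam : ℝ) (hA : A = (a + b) / 2) (hG : G = Real.sqrt (a * b))
    (hlam : lam = A / G)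
    (w₀ : ℝ → ℝ) (hw₀ : ∀ τ, w₀ τ = (a + b) * τ / (a * b + τ ^ 2))
    (μ : Measure ℝ) (hμ : μ = volume.withDensity (fun x => ENNReal.ofReal (1 / x))) :
    ∀ t ∈ Ico (1 : ℝ) lam,
      μ {τ ∈ Ioo a b | t < w₀ τ} =
        ENNReal.ofReal (2 * Real.log ((lam + Real.sqrt (lam ^ 2 - t ^ 2)) / t)) := by
  intro t ht
  obtain ⟨ht1, htlam⟩ := ht
  have hb : 0 < b := ha.trans hab
  have hab0 : 0 < a * b := mul_pos ha hb
  have hGpos : 0 < G := by rw [hG]; exact Real.sqrt_pos.mpr hab0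
  have hG2 : G ^ 2 = a * b := by rw [hG]; exact Real.sq_sqrt hab0.le
  have htpos : 0 < t := lt_of_lt_of_le one_pos ht1
  have hlam' : 2 * t * G < a + b := by
    have h1 : t * G < A := by
      rw [hlam] at htlam
      exact (lt_div_iff₀ hGpos).mp htlam
    rw [hA] at h1; linarith
  have hdisc : 4 * (a * b) * t ^ 2 < (a + b) ^ 2 := by
    nlinarith [mul_pos (mul_pos two_pos htpos) hGpos]
  set D : ℝ := Real.sqrt ((a + b) ^ 2 - 4 * a * b * t ^ 2) with hDdef
  have hD2 : D ^ 2 = (a + b) ^ 2 - 4 * a * b * t ^ 2 := by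
    rw [hDdef]; exact Real.sq_sqrt (by nlinarith)
  have hDpos : 0 < D := by rw [hDdef]; exact Real.sqrt_pos.mpr (by nlinarith)
  have hDlt : D < a + b := by
    rw [hDdef]
    exact (Real.sqrt_lt' (by linarith)).mpr (by nlinarith [mul_pos hab0 (pow_pos htpos 2)])
  set r₁ : ℝ := ((a + b) - D) / (2 * t) with hr₁def
  set r₂ : ℝ := ((a + b) + D) / (2 * t) with hr₂def
  have h2t : (0:ℝ) < 2 * t := by linarith
  have hr1pos : 0 < r₁ := div_pos (by linarith) h2t
  have hr12 : r₁ < r₂ := (div_lt_div_iff_of_pos_right h2t).mpr (by linarith)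
  have hr2pos : 0 < r₂ := hr1pos.trans hr12
  have hprod : r₁ * r₂ = a * b := by
    rw [hr₁def, hr₂def]
    field_simp
    nlinarith [hD2]
  have hsum : t * (r₁ + r₂) = a + b := by
    rw [hr₁def, hr₂def]; field_simp; ring
  have hkey : ∀ τ : ℝ, t * ((τ - r₁) * (τ - r₂)) = t * τ ^ 2 - (a + b) * τ + t * (a * b) := by
    intro τ
    linear_combination (-τ) * hsum + t * hprod
  have haG : a < G := by nlinarith
  have har2 : a < r₂ := by
    rw [hr₂def, lt_div_iff₀ h2t]
    nlinarith
  have hr1b : r₁ < b := by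
    rw [hr₁def, div_lt_iff₀ h2t]
    nlinarith
  -- set equality
  have hset : {τ ∈ Ioo a b | t < w₀ τ} = Ioo r₁ r₂ := by
    ext τ
    simp only [mem_setOf_eq, mem_Ioo, hw₀]
    constructor
    · rintro ⟨⟨haτ, hτb⟩, hwt⟩
      have hτpos : 0 < τ := ha.trans haτ
      have hden : 0 < a * b + τ ^ 2 := by positivity
      have hq : t * (a * b + τ ^ 2) < (a + b) * τ := (lt_div_iff₀ hden).mp hwt
      have hq' : t * ((τ - r₁) * (τ - r₂)) < 0 := by
        rw [hkey τ]; nlinarith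
      have hmul : (τ - r₁) * (τ - r₂) < 0 := by
        nlinarith
      rcases mul_neg_iff.mp hmul with ⟨h1, h2⟩ | ⟨h1, h2⟩
      · constructor <;> linarith
      · linarith
    · rintro ⟨h1, h2⟩
      have hτpos : 0 < τ := hr1pos.trans h1
      have hden : 0 < a * b + τ ^ 2 := by positivity
      have hq' : t * ((τ - r₁) * (τ - r₂)) < 0 :=
        mul_neg_of_pos_of_neg htpos
          (mul_neg_of_pos_of_neg (by linarith) (by linarith))
      have hq : t * (a * b + τ ^ 2) < (a + b) * τ := by
        have := hkey τ; nlinarith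
      refine ⟨⟨?_, ?_⟩, (lt_div_iff₀ hden).mpr hq⟩
      · -- a < τ via a ≤ r₁
        by_contra hcon
        push_neg at hcon
        have hr1a : r₁ < a := by
          by_contra hc2
          push_neg at hc2
          linarith
        have hneg : t * ((a - r₁) * (a - r₂)) < 0 :=
          mul_neg_of_pos_of_neg htpos
            (mul_neg_of_pos_of_neg (by linarith) (by linarith))
        rw [hkey a] at hneg
        nlinarith
      · -- τ < b via r₂ ≤ b
        by_contra hcon
        push_neg at hcon
        have hbr2 : b < r₂ := by
          by_contra hc2
          push_neg at hc2
          linarith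
        have hneg : t * ((b - r₁) * (b - r₂)) < 0 :=
          mul_neg_of_pos_of_neg htpos
            (mul_neg_of_pos_of_neg (by linarith) (by linarith))
        rw [hkey b] at hneg
        nlinarith
  rw [hμ, hset, withDensity_apply _ measurableSet_Ioo]
  -- turn lintegral into integral
  have hint : IntegrableOn (fun x : ℝ => 1 / x) (Ioo r₁ r₂) volume := by
    apply IntegrableOn.mono_set ?_ Ioo_subset_Icc_self
    apply ContinuousOn.integrableOn_Icc
    exact continuousOn_const.div continuousOn_id
      (fun x hx => ne_of_gt (lt_of_lt_of_le hr1pos hx.1))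
  have hae : 0 ≤ᵐ[volume.restrict (Ioo r₁ r₂)] fun x : ℝ => 1 / x := by
    refine (ae_restrict_iff' measurableSet_Ioo).mpr (Filter.Eventually.of_forall ?_)
    intro x hx
    exact div_nonneg zero_le_one (le_of_lt (hr1pos.trans hx.1))
  rw [← ofReal_integral_eq_lintegral_ofReal hint hae]
  congr 1
  have h0 : (0:ℝ) ∉ uIcc r₁ r₂ := by
    rw [Set.uIcc_of_le hr12.le, Set.mem_Icc]
    intro h
    exact absurd h.1 (not_le.mpr hr1pos)
  have hI : ∫ x in Ioo r₁ r₂, 1 / x = Real.log (r₂ / r₁) := by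
    rw [← MeasureTheory.integral_Ioc_eq_integral_Ioo,
      ← intervalIntegral.integral_of_le hr12.le, integral_one_div h0]
  rw [hI]
  -- final log identity
  have hsqrt : Real.sqrt (lam ^ 2 - t ^ 2) = D / (2 * G) := by
    have h1 : lam ^ 2 - t ^ 2 = (D / (2 * G)) ^ 2 := by
      rw [hlam, hA]
      field_simp
      nlinarith [hD2, hG2]
    rw [h1, Real.sqrt_sq (by positivity)]
  have hratio : (lam + Real.sqrt (lam ^ 2 - t ^ 2)) / t = r₂ / G := by
    rw [hsqrt, hlam, hA, hr₂def]
    field_simp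
  rw [hratio, Real.log_div hr2pos.ne' hr1pos.ne', Real.log_div hr2pos.ne' hGpos.ne']
  have hlogsum : Real.log r₁ + Real.log r₂ = 2 * Real.log G := by
    rw [← Real.log_mul hr1pos.ne' hr2pos.ne', hprod, ← hG2, Real.log_pow]
    push_cast; ring
  linarith
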